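/- arXiv:2210.08584 — 2 statements merged into one kernel-verified Lean document; each statement's English description precedes it below -/
import Mathlib

section
/- Let q : [0,T] → R_+ be a gauge function (strictly increasing, continuous, q(0)=0) with q² differentiable on (0,T], and suppose q satisfies condition (q3) with constant C_1, i.e., ∫_0^τ q(ρ)(ρ√(log(T/ρ)))^{-1} dρ ≤ C_1 q(τ)√(log(T/τ)). Then for every sufficiently small ε > 0, ∫_0^ε √(log(T/q^{-1}(ρ))) dρ ≤ (C_1 + 1) ε √(log(T/q^{-1}(ε))). -/
open MeasureTheory ProbabilityTheory Filter Set Topology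

private lemma ftc_aux (T : ℝ) (hT : 0 < T) (b a : ℝ) (hb : 0 < b) (hba : b ≤ a) (haT : a < T) :
    ∫ τ in Set.Ioc b a, 1 / (τ * Real.sqrt (Real.log (T / τ))) =
      2 * Real.sqrt (Real.log (T / b)) - 2 * Real.sqrt (Real.log (T / a)) := by
  have key : ∀ x ∈ Set.Icc b a, HasDerivAt (fun t => -(2 * Real.sqrt (Real.log (T / t))))
      (1 / (x * Real.sqrt (Real.log (T / x)))) x := by
    intro x hx
    have hx0 : 0 < x := lt_of_lt_of_le hb hx.1
    have hxT : x < T := lt_of_le_of_lt hx.2 haT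
    have hlog : 0 < Real.log (T / x) := Real.log_pos (by rw [lt_div_iff₀ hx0]; linarith)
    have h1 : HasDerivAt (fun t : ℝ => T / t) (T * -(x ^ 2)⁻¹) x := by
      simpa [div_eq_mul_inv] using (hasDerivAt_inv hx0.ne').const_mul T
    have h2 : HasDerivAt (fun t => Real.log (T / t)) (T * -(x ^ 2)⁻¹ / (T / x)) x :=
      h1.log (by positivity)
    have h3 : HasDerivAt (fun t => -(2 * Real.sqrt (Real.log (T / t)))) _ x :=
      ((h2.sqrt hlog.ne').const_mul 2).neg
    convert h3 using 1
    have hs : 0 < Real.sqrt (Real.log (T / x)) := Real.sqrt_pos.2 hlog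
    field_simp
  have hcontIcc : ContinuousOn (fun τ => 1 / (τ * Real.sqrt (Real.log (T / τ)))) (Set.Icc b a) := by
    apply continuousOn_const.div
    · apply continuousOn_id.mul
      apply ContinuousOn.sqrt
      apply ContinuousOn.log
      · exact continuousOn_const.div continuousOn_id fun x hx => (lt_of_lt_of_le hb hx.1).ne'
      · intro x hx
        have hx0 : 0 < x := lt_of_lt_of_le hb hx.1
        positivity
    · intro x hx
      have hx0 : 0 < x := lt_of_lt_of_le hb hx.1
      have hxT : x < T := lt_of_le_of_lt hx.2 haT
      have hlog : 0 < Real.log (T / x) := Real.log_pos (by rw [lt_div_iff₀ hx0]; linarith)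
      positivity
  have hint : IntervalIntegrable (fun τ => 1 / (τ * Real.sqrt (Real.log (T / τ)))) volume b a :=
    hcontIcc.intervalIntegrable_of_Icc hba
  have heq := intervalIntegral.integral_eq_sub_of_hasDerivAt
    (fun x hx => key x (by rwa [Set.uIcc_of_le hba] at hx)) hint
  rw [intervalIntegral.integral_of_le hba] at heq
  rw [heq]; ring

private lemma g_cont (T : ℝ) (hT : 0 < T) (b a : ℝ) (hb : 0 < b) (hba : b ≤ a) (haT : a < T) :
    ContinuousOn (fun τ => 1 / (τ * Real.sqrt (Real.log (T / τ)))) (Set.Icc b a) := by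
  apply continuousOn_const.div
  · apply continuousOn_id.mul
    apply ContinuousOn.sqrt
    apply ContinuousOn.log
    · exact continuousOn_const.div continuousOn_id fun x hx => (lt_of_lt_of_le hb hx.1).ne'
    · intro x hx
      have hx0 : 0 < x := lt_of_lt_of_le hb hx.1
      positivity
  · intro x hx
    have hx0 : 0 < x := lt_of_lt_of_le hb hx.1
    have hxT : x < T := lt_of_le_of_lt hx.2 haT
    have hlog : 0 < Real.log (T / x) := Real.log_pos (by rw [lt_div_iff₀ hx0]; linarith)
    positivity

theorem stmt6 (T : ℝ) (hT : 0 < T) (q qinv : ℝ → ℝ)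
    (hq0 : q 0 = 0) (hqc : ContinuousOn q (Set.Icc 0 T)) (hqm : StrictMonoOn q (Set.Icc 0 T))
    (hdiff : ∀ τ ∈ Set.Ioc (0:ℝ) T, DifferentiableAt ℝ (fun s => q s ^ 2) τ)
    (hinv : ∀ τ ∈ Set.Icc (0:ℝ) T, qinv (q τ) = τ)
    (hinv' : ∀ ρ ∈ Set.Icc 0 (q T), qinv ρ ∈ Set.Icc 0 T ∧ q (qinv ρ) = ρ)
    (C₁ : ℝ) (hC₁ : 0 < C₁)
    (hq3 : ∀ τ ∈ Set.Ioc (0:ℝ) T,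
      (∫ ρ in Set.Ioc (0:ℝ) τ, q ρ / (ρ * Real.sqrt (Real.log (T / ρ)))) ≤
        C₁ * (q τ * Real.sqrt (Real.log (T / τ)))) :
    ∃ ε₀ > 0, ∀ ε ∈ Set.Ioc (0:ℝ) ε₀,
      (∫ ρ in Set.Ioc (0:ℝ) ε, Real.sqrt (Real.log (T / qinv ρ))) ≤
        (C₁ + 1) * ε * Real.sqrt (Real.log (T / qinv ε)) := by
  classical
  have h0mem : (0:ℝ) ∈ Set.Icc (0:ℝ) T := ⟨le_refl _, hT.le⟩
  have hT2mem : T / 2 ∈ Set.Icc (0:ℝ) T := ⟨by linarith, by linarith⟩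
  have hTmem : T ∈ Set.Icc (0:ℝ) T := ⟨hT.le, le_refl _⟩
  have hε₀pos : 0 < q (T / 2) := by
    have := hqm h0mem hT2mem (by linarith)
    rwa [hq0] at this
  have hqT2T : q (T / 2) ≤ q T := hqm.monotoneOn hT2mem hTmem (by linarith)
  have hqT0 : 0 ≤ q T := le_trans hε₀pos.le hqT2T
  refine ⟨q (T / 2), hε₀pos, ?_⟩
  rintro ε ⟨hε0, hε₂⟩
  have hεqT : ε ≤ q T := hε₂.trans hqT2T
  obtain ⟨haI, haq⟩ := hinv' ε ⟨hε0.le, hεqT⟩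
  set a := qinv ε with ha_def
  have ha0 : 0 < a := by
    rcases lt_or_eq_of_le haI.1 with h | h
    · exact h
    · exfalso; rw [← h, hq0] at haq; linarith
  have haT2 : a ≤ T / 2 := by
    by_contra h
    push_neg at h
    have := hqm hT2mem haI h
    rw [haq] at this; linarith
  have haT : a < T := by linarith
  set c : ℝ := Real.sqrt (Real.log (T / a)) with hc_def
  have hc0 : 0 ≤ c := Real.sqrt_nonneg _
  have hbfact : ∀ ρ ∈ Set.Ioc (0:ℝ) ε,
      0 < qinv ρ ∧ qinv ρ ≤ a ∧ q (qinv ρ) = ρ ∧ qinv ρ ∈ Set.Icc 0 T := by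
    rintro ρ ⟨hρ0, hρε⟩
    obtain ⟨hbI, hbq⟩ := hinv' ρ ⟨hρ0.le, hρε.trans hεqT⟩
    have hb0 : 0 < qinv ρ := by
      rcases lt_or_eq_of_le hbI.1 with h | h
      · exact h
      · exfalso; rw [← h, hq0] at hbq; linarith
    have hba : qinv ρ ≤ a := by
      by_contra h; push_neg at h
      have := hqm haI hbI h
      rw [haq, hbq] at this; linarith
    exact ⟨hb0, hba, hbq, hbI⟩
  -- RHS nonneg, used in degenerate case
  have hRHS0 : 0 ≤ (C₁ + 1) * ε * c :=
    mul_nonneg (mul_nonneg (by linarith) hε0.le) hc0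
  by_cases hfi : IntegrableOn (fun ρ => Real.sqrt (Real.log (T / qinv ρ))) (Set.Ioc 0 ε) volume
  swap
  · rw [integral_undef hfi]; exact hRHS0
  -- main case
  -- clamped versions of q and qinv
  set qc : ℝ → ℝ := fun τ => q (min (max τ 0) T) with hqc_def
  have hclamp_mem : ∀ τ : ℝ, min (max τ 0) T ∈ Set.Icc (0:ℝ) T := fun τ =>
    ⟨le_min (le_max_right _ _) hT.le, min_le_right _ _⟩
  have hqc_cont : Continuous qc :=
    hqc.comp_continuous ((continuous_id.max continuous_const).min continuous_const) hclamp_mem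
  have hqc_eq : ∀ τ ∈ Set.Icc (0:ℝ) T, qc τ = q τ := by
    intro τ hτ
    simp only [hqc_def]
    rw [max_eq_left hτ.1, min_eq_left hτ.2]
  -- g
  set g : ℝ → ℝ := fun τ => 1 / (τ * Real.sqrt (Real.log (T / τ))) with hg_def
  have hg_meas : Measurable g := by
    apply Measurable.div measurable_const
    exact measurable_id.mul ((Real.measurable_log.comp
      (measurable_const.div measurable_id)).sqrt)
  have hg_nonneg : ∀ τ : ℝ, 0 < τ → 0 ≤ g τ := fun τ hτ =>
    one_div_nonneg.2 (mul_nonneg hτ.le (Real.sqrt_nonneg _))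
  -- integrability of g on Ioc b a'
  have hg_int : ∀ b : ℝ, 0 < b → b ≤ a → IntegrableOn g (Set.Ioc b a) volume :=
    fun b hb hba => ((g_cont T hT b a hb hba haT).integrableOn_Icc).mono_set Set.Ioc_subset_Icc_self
  -- the double-integral kernel
  set F : ℝ × ℝ → ENNReal := fun p =>
    Set.indicator {p : ℝ × ℝ | p.1 < qc p.2} (fun p => ENNReal.ofReal (g p.2)) p with hF_def
  have hF_meas : Measurable F := by
    apply Measurable.indicator
    · exact (ENNReal.measurable_ofReal.comp (hg_meas.comp measurable_snd))
    · exact measurableSet_lt measurable_fst (hqc_cont.measurable.comp measurable_snd)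
  set I : ENNReal := ∫⁻ τ in Set.Ioc (0:ℝ) a,
      ENNReal.ofReal (q τ / (τ * Real.sqrt (Real.log (T / τ)))) with hI_def
  set J : ENNReal := ∫⁻ ρ in Set.Ioc (0:ℝ) ε,
      ENNReal.ofReal (2 * Real.sqrt (Real.log (T / qinv ρ)) - 2 * c) with hJ_def
  -- Step A : J equals iterated integral of F
  have stepA : J = ∫⁻ ρ in Set.Ioc (0:ℝ) ε, ∫⁻ τ in Set.Ioc (0:ℝ) a, F (ρ, τ) := by
    apply setLIntegral_congr_fun measurableSet_Ioc
    intro ρ hρ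
    beta_reduce
    obtain ⟨hb0, hba, hbq, hbI⟩ := hbfact ρ hρ
    set b := qinv ρ with hb_def
    -- pointwise on Ioc 0 a, F (ρ, τ) = (Ioi b).indicator (ofReal ∘ g)
    have h1 : (∫⁻ τ in Set.Ioc (0:ℝ) a, F (ρ, τ)) =
        ∫⁻ τ in Set.Ioc (0:ℝ) a, (Set.Ioi b).indicator (fun τ => ENNReal.ofReal (g τ)) τ := by
      apply setLIntegral_congr_fun measurableSet_Ioc
      intro τ hτ
      have hτmem : τ ∈ Set.Icc (0:ℝ) T := ⟨hτ.1.le, hτ.2.trans haT.le⟩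
      have hcond : ρ < qc τ ↔ b < τ := by
        rw [hqc_eq τ hτmem, ← hbq]
        exact hqm.lt_iff_lt hbI hτmem
      simp only [hF_def, Set.indicator_apply, Set.mem_setOf_eq, Set.mem_Ioi]
      rw [if_congr hcond rfl rfl]
    rw [h1, lintegral_indicator measurableSet_Ioi, Measure.restrict_restrict measurableSet_Ioi]
    have h2 : Set.Ioi b ∩ Set.Ioc 0 a = Set.Ioc b a := by
      ext x
      simp only [Set.mem_inter_iff, Set.mem_Ioi, Set.mem_Ioc]
      constructor
      · rintro ⟨h1, h2, h3⟩; exact ⟨h1, h3⟩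
      · rintro ⟨h1, h2⟩; exact ⟨h1, hb0.trans h1, h2⟩
    rw [h2]
    have h3 : (∫⁻ τ in Set.Ioc b a, ENNReal.ofReal (g τ)) =
        ENNReal.ofReal (∫ τ in Set.Ioc b a, g τ) := by
      rw [ofReal_integral_eq_lintegral_ofReal (hg_int b hb0 hba)]
      refine (ae_restrict_iff' measurableSet_Ioc).2 (ae_of_all _ fun τ hτ => hg_nonneg τ (hb0.trans hτ.1))
    rw [h3, hg_def]
    rw [ftc_aux T hT b a hb0 hba haT]
  -- swap
  have stepSwap : (∫⁻ ρ in Set.Ioc (0:ℝ) ε, ∫⁻ τ in Set.Ioc (0:ℝ) a, F (ρ, τ)) =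
      ∫⁻ τ in Set.Ioc (0:ℝ) a, ∫⁻ ρ in Set.Ioc (0:ℝ) ε, F (ρ, τ) := by
    apply lintegral_lintegral_swap
    exact (hF_meas.comp (measurable_id)).aemeasurable
  -- Step B
  have stepB : (∫⁻ τ in Set.Ioc (0:ℝ) a, ∫⁻ ρ in Set.Ioc (0:ℝ) ε, F (ρ, τ)) = I := by
    apply setLIntegral_congr_fun measurableSet_Ioc
    intro τ hτ
    have hτmem : τ ∈ Set.Icc (0:ℝ) T := ⟨hτ.1.le, hτ.2.trans haT.le⟩
    have hqτpos : 0 < q τ := by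
      have := hqm h0mem hτmem hτ.1
      rwa [hq0] at this
    have hqτε : q τ ≤ ε := by
      rw [← haq]
      exact hqm.monotoneOn hτmem haI hτ.2
    have h1 : ∀ ρ : ℝ, F (ρ, τ) = (Set.Iio (q τ)).indicator
        (fun _ => ENNReal.ofReal (g τ)) ρ := by
      intro ρ
      simp only [hF_def, Set.indicator_apply, Set.mem_setOf_eq, Set.mem_Iio,
        hqc_eq τ hτmem]
    simp only [h1]
    rw [lintegral_indicator measurableSet_Iio, Measure.restrict_restrict measurableSet_Iio]
    rw [setLIntegral_const]
    have h2 : Set.Iio (q τ) ∩ Set.Ioc 0 ε = Set.Ioo 0 (q τ) := by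
      ext x
      simp only [Set.mem_inter_iff, Set.mem_Iio, Set.mem_Ioc, Set.mem_Ioo]
      constructor
      · rintro ⟨h1, h2, h3⟩; exact ⟨h2, h1⟩
      · rintro ⟨h1, h2⟩; exact ⟨h2, h1, (le_of_lt h2).trans hqτε⟩
    rw [h2, Real.volume_Ioo]
    rw [← ENNReal.ofReal_mul (hg_nonneg τ hτ.1)]
    congr 1
    rw [hg_def]
    field_simp
    rw [sub_zero]
  have hJI : J = I := by rw [stepA, stepSwap, stepB]
  -- Now the real analysis
  set p : ℝ → ℝ := fun ρ => 2 * Real.sqrt (Real.log (T / qinv ρ)) - 2 * c with hp_def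
  have hεvol : volume (Set.Ioc (0:ℝ) ε) < ⊤ := measure_Ioc_lt_top
  have hp_int : IntegrableOn p (Set.Ioc (0:ℝ) ε) volume := by
    apply Integrable.sub (hfi.const_mul 2)
    exact integrableOn_const hεvol.ne
  have hp_nn : 0 ≤ᵐ[volume.restrict (Set.Ioc (0:ℝ) ε)] p := by
    refine (ae_restrict_iff' measurableSet_Ioc).2 (ae_of_all _ fun ρ hρ => ?_)
    obtain ⟨hb0, hba, hbq, hbI⟩ := hbfact ρ hρ
    have h1 : T / a ≤ T / qinv ρ := div_le_div_of_nonneg_left hT.le hb0 hba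
    have h2 : c ≤ Real.sqrt (Real.log (T / qinv ρ)) := by
      apply Real.sqrt_le_sqrt
      exact Real.log_le_log (by positivity) h1
    simp only [Pi.zero_apply, hp_def]
    linarith
  have hJr : J = ENNReal.ofReal (∫ ρ in Set.Ioc (0:ℝ) ε, p ρ) :=
    (ofReal_integral_eq_lintegral_ofReal hp_int hp_nn).symm
  have hIlt : I < ⊤ := by
    rw [← hJI, hJr]; exact ENNReal.ofReal_lt_top
  -- h integrable on Ioc 0 a
  set h : ℝ → ℝ := fun τ => q τ / (τ * Real.sqrt (Real.log (T / τ))) with hh_def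
  have hh_nn : 0 ≤ᵐ[volume.restrict (Set.Ioc (0:ℝ) a)] h := by
    refine (ae_restrict_iff' measurableSet_Ioc).2 (ae_of_all _ fun τ hτ => ?_)
    have hτmem : τ ∈ Set.Icc (0:ℝ) T := ⟨hτ.1.le, hτ.2.trans haT.le⟩
    have hqτpos : 0 < q τ := by
      have := hqm h0mem hτmem hτ.1; rwa [hq0] at this
    exact div_nonneg hqτpos.le (mul_nonneg hτ.1.le (Real.sqrt_nonneg _))
  have hh_meas : AEStronglyMeasurable h (volume.restrict (Set.Ioc (0:ℝ) a)) := by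
    apply ContinuousOn.aestronglyMeasurable _ measurableSet_Ioc
    apply ContinuousOn.div
    · exact hqc.mono fun x hx => ⟨hx.1.le, hx.2.trans haT.le⟩
    · apply continuousOn_id.mul
      apply ContinuousOn.sqrt
      apply ContinuousOn.log
      · exact continuousOn_const.div continuousOn_id fun x hx => hx.1.ne'
      · intro x hx; have := hx.1; positivity
    · intro x hx
      have hx0 : 0 < x := hx.1
      have hxT : x < T := lt_of_le_of_lt hx.2 haT
      have hlog : 0 < Real.log (T / x) := Real.log_pos (by rw [lt_div_iff₀ hx0]; linarith)
      positivity
  have hh_int : IntegrableOn h (Set.Ioc (0:ℝ) a) volume := by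
    refine ⟨hh_meas, ?_⟩
    rw [hasFiniteIntegral_iff_ofReal hh_nn]
    exact hIlt
  have hIr : (∫ τ in Set.Ioc (0:ℝ) a, h τ) = I.toReal := by
    rw [integral_eq_lintegral_of_nonneg_ae hh_nn hh_meas]
  have hq3a := hq3 a ⟨ha0, haT.le⟩
  rw [haq] at hq3a
  -- ∫ p = I.toReal ≤ C₁ * (ε * c)
  have hpI : (∫ ρ in Set.Ioc (0:ℝ) ε, p ρ) = I.toReal := by
    have h1 : ENNReal.ofReal (∫ ρ in Set.Ioc (0:ℝ) ε, p ρ) = I := by rw [← hJr, hJI]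
    have h2 : 0 ≤ ∫ ρ in Set.Ioc (0:ℝ) ε, p ρ := integral_nonneg_of_ae hp_nn
    rw [← h1, ENNReal.toReal_ofReal h2]
  have hpbound : (∫ ρ in Set.Ioc (0:ℝ) ε, p ρ) ≤ C₁ * (ε * c) := by
    rw [hpI, ← hIr]
    exact hq3a
  -- final computation
  have hfeq : (fun ρ => Real.sqrt (Real.log (T / qinv ρ))) = fun ρ => p ρ / 2 + c := by
    funext ρ; simp only [hp_def]; ring
  rw [hfeq]
  rw [integral_add ((hp_int.div_const 2)) (integrableOn_const hεvol.ne)]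
  rw [setIntegral_const, measureReal_def, Real.volume_Ioc, smul_eq_mul]
  rw [ENNReal.toReal_ofReal (by linarith)]
  have h4 : (∫ ρ in Set.Ioc (0:ℝ) ε, p ρ / 2) = (∫ ρ in Set.Ioc (0:ℝ) ε, p ρ) / 2 := by
    rw [integral_div]
  rw [h4]
  have h5 : 0 ≤ ε * c := mul_nonneg hε0.le hc0
  nlinarith [mul_nonneg (mul_nonneg hC₁.le hε0.le) hc0]
end

section
/- Let q be a gauge function on [0,T] with q² of class C¹ on (0,T] and K = √(d(q²)/dτ). Define the one-dimensional q-Brownian motion B^q(x) = ∫_0^x K(x-y) dW(y) for x ∈ [0,T], where W is a standard Brownian motion. Suppose d(q²)/dτ is non-increasing on (0,T]. Then for all x, y ∈ [0,T], E([B^q(x) - B^q(y)]²) ≤ 2 q²(|x - y|). -/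
open MeasureTheory ProbabilityTheory Filter Set Topology

-- Step 1: FTC for a > 0
theorem ftcA (T : ℝ) (q K : ℝ → ℝ)
    (hqc : ContinuousOn q (Set.Icc 0 T))
    (hK : ∀ τ ∈ Set.Ioc (0:ℝ) T, HasDerivAt (fun s => q s ^ 2) (K τ ^ 2) τ)
    (hmono : AntitoneOn (fun τ => K τ ^ 2) (Set.Ioc 0 T))
    {a b : ℝ} (ha : 0 < a) (hab : a ≤ b) (hbT : b ≤ T) :
    IntegrableOn (fun u => K u ^ 2) (Set.Ioc a b) volume ∧
      ∫ u in Set.Ioc a b, K u ^ 2 = q b ^ 2 - q a ^ 2 := by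
  have hsub : Set.uIcc a b ⊆ Set.Ioc 0 T := by
    rw [Set.uIcc_of_le hab]
    intro u hu; exact ⟨lt_of_lt_of_le ha hu.1, le_trans hu.2 hbT⟩
  have hint : IntervalIntegrable (fun u => K u ^ 2) volume a b :=
    (hmono.mono hsub).intervalIntegrable
  have hcont : ContinuousOn (fun s => q s ^ 2) (Set.Icc a b) := by
    exact ((hqc.mono (Set.Icc_subset_Icc ha.le hbT)).pow 2)
  have hderiv : ∀ u ∈ Set.Ioo a b, HasDerivWithinAt (fun s => q s ^ 2) (K u ^ 2) (Set.Ioi u) u :=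
    fun u hu => ((hK u ⟨lt_trans ha hu.1, le_trans hu.2.le hbT⟩).hasDerivWithinAt)
  have := intervalIntegral.integral_eq_sub_of_hasDeriv_right_of_le hab hcont hderiv hint
  refine ⟨(intervalIntegrable_iff_integrableOn_Ioc_of_le hab).mp hint, ?_⟩
  rw [← intervalIntegral.integral_of_le hab, this]

theorem ftc0 (T : ℝ) (q K : ℝ → ℝ) (hq0 : q 0 = 0)
    (hqc : ContinuousOn q (Set.Icc 0 T))
    (hK : ∀ τ ∈ Set.Ioc (0:ℝ) T, HasDerivAt (fun s => q s ^ 2) (K τ ^ 2) τ)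
    (hmono : AntitoneOn (fun τ => K τ ^ 2) (Set.Ioc 0 T))
    {b : ℝ} (hb : 0 < b) (hbT : b ≤ T) :
    IntegrableOn (fun u => K u ^ 2) (Set.Ioc 0 b) volume ∧
      ∫ u in Set.Ioc 0 b, K u ^ 2 = q b ^ 2 := by
  set a : ℕ → ℝ := fun n => b / (n + 1) with ha_def
  have hapos : ∀ n, 0 < a n := fun n => by positivity
  have haleb : ∀ n, a n ≤ b := fun n => by
    rw [ha_def]; rw [div_le_iff₀ (by positivity)]
    nlinarith [Nat.cast_nonneg (α := ℝ) n]
  have hFTC := fun n => ftcA T q K hqc hK hmono (hapos n) (haleb n) hbT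
  have haT : ∀ n, a n ∈ Set.Icc (0:ℝ) T := fun n => ⟨(hapos n).le, le_trans (haleb n) hbT⟩
  have ha0 : Tendsto a atTop (𝓝 0) := by
    have : Tendsto (fun n : ℕ => b * (1 / (n + 1))) atTop (𝓝 (b * 0)) :=
      tendsto_const_nhds.mul tendsto_one_div_add_atTop_nhds_zero_nat
    simpa [ha_def, div_eq_mul_inv, one_div] using this
  have hqa : Tendsto (fun n => q (a n)) atTop (𝓝 0) := by
    have hc : ContinuousWithinAt q (Set.Icc 0 T) 0 :=
      hqc 0 ⟨le_refl 0, (lt_of_lt_of_le hb hbT).le⟩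
    have := hc.tendsto.comp (tendsto_nhdsWithin_iff.mpr ⟨ha0, Eventually.of_forall haT⟩)
    simpa [hq0, Function.comp_def] using this
  have hint : IntegrableOn (fun u => K u ^ 2) (Set.Ioc 0 b) volume := by
    apply integrableOn_Ioc_of_intervalIntegral_norm_bounded_left
      (I := q b ^ 2) (fun n => (hFTC n).1) ha0
    filter_upwards with n
    have : ∫ u in Set.Ioc (a n) b, ‖K u ^ 2‖ = ∫ u in Set.Ioc (a n) b, K u ^ 2 := by
      refine setIntegral_congr_fun measurableSet_Ioc fun u _ => ?_
      simp [abs_of_nonneg (sq_nonneg (K u))]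
    rw [this, (hFTC n).2]
    nlinarith [sq_nonneg (q (a n))]
  refine ⟨hint, ?_⟩
  have hmonoS : Monotone (fun n => Set.Ioc (a n) b) := by
    intro m n hmn
    apply Set.Ioc_subset_Ioc_left
    rw [ha_def]
    apply div_le_div_of_nonneg_left hb.le (by positivity)
    push_cast; linarith [(Nat.cast_le (α := ℝ)).mpr hmn]
  have hUnion : (⋃ n, Set.Ioc (a n) b) = Set.Ioc 0 b := by
    apply Set.Subset.antisymm
    · exact Set.iUnion_subset fun n => Set.Ioc_subset_Ioc_left (hapos n).le
    · intro u hu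
      obtain ⟨n, hn⟩ := ((tendsto_order.1 ha0).2 u hu.1).exists
      exact Set.mem_iUnion.2 ⟨n, hn, hu.2⟩
  have hten : Tendsto (fun n => ∫ u in Set.Ioc (a n) b, K u ^ 2) atTop
      (𝓝 (∫ u in Set.Ioc 0 b, K u ^ 2)) := by
    have := MeasureTheory.tendsto_setIntegral_of_monotone
      (fun n => measurableSet_Ioc) hmonoS (hUnion ▸ hint)
    simpa [hUnion] using this
  have hten2 : Tendsto (fun n => ∫ u in Set.Ioc (a n) b, K u ^ 2) atTop (𝓝 (q b ^ 2)) := by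
    simp_rw [fun n => (hFTC n).2]
    have : Tendsto (fun n => q b ^ 2 - q (a n) ^ 2) atTop (𝓝 (q b ^ 2 - 0 ^ 2)) :=
      tendsto_const_nhds.sub ((hqa.pow 2))
    simpa using this
  exact tendsto_nhds_unique hten hten2

-- combined FTC
theorem ftc (T : ℝ) (q K : ℝ → ℝ) (hq0 : q 0 = 0)
    (hqc : ContinuousOn q (Set.Icc 0 T))
    (hK : ∀ τ ∈ Set.Ioc (0:ℝ) T, HasDerivAt (fun s => q s ^ 2) (K τ ^ 2) τ)
    (hmono : AntitoneOn (fun τ => K τ ^ 2) (Set.Ioc 0 T))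
    {a b : ℝ} (ha : 0 ≤ a) (hab : a ≤ b) (hbT : b ≤ T) :
    IntegrableOn (fun u => K u ^ 2) (Set.Ioc a b) volume ∧
      ∫ u in Set.Ioc a b, K u ^ 2 = q b ^ 2 - q a ^ 2 := by
  rcases eq_or_lt_of_le hab with rfl | hab'
  · simp
  rcases eq_or_lt_of_le ha with rfl | ha'
  · obtain ⟨h1, h2⟩ := ftc0 T q K hq0 hqc hK hmono hab' hbT
    exact ⟨h1, by rw [h2, hq0]; ring⟩
  · exact ftcA T q K hqc hK hmono ha' hab hbT

-- reflection
theorem refl_int (g : ℝ → ℝ) {a b c : ℝ} (hab : a ≤ b)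
    (h : IntegrableOn g (Set.Ioc (c - b) (c - a)) volume) :
    IntegrableOn (fun u => g (c - u)) (Set.Ioc a b) volume ∧
      ∫ u in Set.Ioc a b, g (c - u) = ∫ v in Set.Ioc (c - b) (c - a), g v := by
  have hi : IntervalIntegrable g volume (c - b) (c - a) :=
    (intervalIntegrable_iff_integrableOn_Ioc_of_le (by linarith)).mpr h
  have hi2 : IntervalIntegrable (fun u => g (c - u)) volume a b := by
    have := (hi.comp_sub_left c).symm
    simpa using this
  refine ⟨(intervalIntegrable_iff_integrableOn_Ioc_of_le hab).mp hi2, ?_⟩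
  rw [← intervalIntegral.integral_of_le hab, intervalIntegral.integral_comp_sub_left,
    intervalIntegral.integral_of_le (by linarith)]

set_option maxHeartbeats 1000000 in
theorem keyest (T : ℝ) (hT : 0 < T) (q K : ℝ → ℝ)
    (hq0 : q 0 = 0) (hqc : ContinuousOn q (Set.Icc 0 T)) (hqm : StrictMonoOn q (Set.Icc 0 T))
    (hK : ∀ τ ∈ Set.Ioc (0:ℝ) T, HasDerivAt (fun s => q s ^ 2) (K τ ^ 2) τ)
    (hKpos : ∀ τ ∈ Set.Ioc (0:ℝ) T, 0 ≤ K τ)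
    (hmono : AntitoneOn (fun τ => K τ ^ 2) (Set.Ioc 0 T))
    {x y : ℝ} (hy0 : 0 ≤ y) (hyx : y ≤ x) (hxT : x ≤ T) :
    ∫ u in Set.Ioc (0:ℝ) T,
      ((if u < x then K (x - u) else 0) - (if u < y then K (y - u) else 0)) ^ 2
      ≤ 2 * q (x - y) ^ 2 := by
  set f : ℝ → ℝ := fun u =>
    ((if u < x then K (x - u) else 0) - (if u < y then K (y - u) else 0)) ^ 2 with hf_def
  rcases eq_or_lt_of_le hyx with rfl | hyx'
  · have hfz : f = fun _ => 0 := funext fun u => by simp [hf_def]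
    rw [hfz]
    simp [hq0]
  have hx0 : 0 < x := lt_of_le_of_lt hy0 hyx'
  have hyT : y ≤ T := le_trans hyx hxT
  -- FTC values
  obtain ⟨i0y, v0y⟩ := ftc T q K hq0 hqc hK hmono (le_refl 0) hy0 hyT
  obtain ⟨ixyx, vxyx⟩ := ftc T q K hq0 hqc hK hmono (by linarith : (0:ℝ) ≤ x - y)
    (by linarith : x - y ≤ x) hxT
  obtain ⟨i0xy, v0xy⟩ := ftc T q K hq0 hqc hK hmono (le_refl 0)
    (by linarith : (0:ℝ) ≤ x - y) (by linarith)
  -- reflections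
  have A1 := refl_int (fun u => K u ^ 2) (a := 0) (b := y) (c := y) hy0 (by simpa using i0y)
  simp only [sub_self, sub_zero] at A1
  obtain ⟨iA1, vA1⟩ := A1
  rw [v0y] at vA1
  have A2 := refl_int (fun u => K u ^ 2) (a := 0) (b := y) (c := x) hy0 (by simpa using ixyx)
  simp only [sub_zero] at A2
  obtain ⟨iA2, vA2⟩ := A2
  rw [vxyx] at vA2
  have A3 := refl_int (fun u => K u ^ 2) (a := y) (b := x) (c := x) hyx (by simpa using i0xy)
  simp only [sub_self] at A3
  obtain ⟨iA3, vA3⟩ := A3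
  rw [v0xy] at vA3
  -- measurability on (0, y)
  have hIooIoc : volume.restrict (Set.Ioc (0:ℝ) y) = volume.restrict (Set.Ioo 0 y) :=
    (Measure.restrict_congr_set Ioo_ae_eq_Ioc).symm
  have memx : ∀ u ∈ Set.Ioo (0:ℝ) y, x - u ∈ Set.Ioc (0:ℝ) T := fun u hu =>
    ⟨by linarith [hu.2], by linarith [hu.1]⟩
  have memy : ∀ u ∈ Set.Ioo (0:ℝ) y, y - u ∈ Set.Ioc (0:ℝ) T := fun u hu =>
    ⟨by linarith [hu.2], by linarith [hu.1]⟩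
  have mono1 : MonotoneOn (fun u => K (x - u) ^ 2) (Set.Ioo 0 y) := fun u1 h1 u2 h2 h12 =>
    hmono (memx u2 h2) (memx u1 h1) (by linarith)
  have mono2 : MonotoneOn (fun u => K (y - u) ^ 2) (Set.Ioo 0 y) := fun u1 h1 u2 h2 h12 =>
    hmono (memy u2 h2) (memy u1 h1) (by linarith)
  have am1 : AEMeasurable (fun u => K (x - u)) (volume.restrict (Set.Ioo 0 y)) := by
    have hm := aemeasurable_restrict_of_monotoneOn (μ := volume) measurableSet_Ioo mono1
    refine (Real.continuous_sqrt.measurable.comp_aemeasurable hm).congr ?_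
    filter_upwards [ae_restrict_mem measurableSet_Ioo] with u hu
    exact Real.sqrt_sq (hKpos _ (memx u hu))
  have am2 : AEMeasurable (fun u => K (y - u)) (volume.restrict (Set.Ioo 0 y)) := by
    have hm := aemeasurable_restrict_of_monotoneOn (μ := volume) measurableSet_Ioo mono2
    refine (Real.continuous_sqrt.measurable.comp_aemeasurable hm).congr ?_
    filter_upwards [ae_restrict_mem measurableSet_Ioo] with u hu
    exact Real.sqrt_sq (hKpos _ (memy u hu))
  have amf : AEStronglyMeasurable f (volume.restrict (Set.Ioc 0 y)) := by
    rw [hIooIoc]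
    refine (((am1.sub am2).pow_const 2).aestronglyMeasurable).congr ?_
    filter_upwards [ae_restrict_mem measurableSet_Ioo] with u hu
    simp [hf_def, hu.2, lt_trans hu.2 hyx']
  -- pointwise bound
  have hAB : ∀ u ∈ Set.Ioo (0:ℝ) y, K (x - u) ≤ K (y - u) := by
    intro u hu
    have h2 := hmono (memy u hu) (memx u hu) (by linarith [hu.2])
    have h3 := Real.sqrt_le_sqrt h2
    rwa [Real.sqrt_sq (hKpos _ (memx u hu)), Real.sqrt_sq (hKpos _ (memy u hu))] at h3
  have bound : ∀ u ∈ Set.Ioo (0:ℝ) y, f u ≤ K (y - u) ^ 2 - K (x - u) ^ 2 := by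
    intro u hu
    have h1 := hAB u hu
    have h2 := hKpos _ (memx u hu)
    have hfu : f u = (K (x - u) - K (y - u)) ^ 2 := by
      simp [hf_def, hu.2, lt_trans hu.2 hyx']
    rw [hfu]; nlinarith
  have intf : IntegrableOn f (Set.Ioc 0 y) volume := by
    refine MeasureTheory.Integrable.mono iA1 amf ?_
    rw [hIooIoc]
    filter_upwards [ae_restrict_mem measurableSet_Ioo] with u hu
    have h1 := bound u hu
    have h0 : (0:ℝ) ≤ f u := sq_nonneg _
    rw [Real.norm_eq_abs, Real.norm_eq_abs, abs_of_nonneg h0, abs_of_nonneg (sq_nonneg _)]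
    nlinarith [sq_nonneg (K (x - u))]
  have est1 : ∫ u in Set.Ioc (0:ℝ) y, f u ≤ (q y ^ 2 - q 0 ^ 2) - (q x ^ 2 - q (x - y) ^ 2) := by
    have hIntSub : Integrable (fun u => K (y - u) ^ 2 - K (x - u) ^ 2)
        (volume.restrict (Set.Ioc 0 y)) := iA1.sub iA2
    have h := integral_mono_ae intf hIntSub ?_
    · rwa [integral_sub iA1 iA2, vA1, vA2] at h
    · rw [hIooIoc]
      filter_upwards [ae_restrict_mem measurableSet_Ioo] with u hu
      exact bound u hu
  -- middle piece
  have hIooIoc2 : volume.restrict (Set.Ioc y x) = volume.restrict (Set.Ioo y x) :=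
    (Measure.restrict_congr_set Ioo_ae_eq_Ioc).symm
  have eq2 : (fun u => K (x - u) ^ 2) =ᵐ[volume.restrict (Set.Ioc y x)] f := by
    rw [hIooIoc2]
    filter_upwards [ae_restrict_mem measurableSet_Ioo] with u hu
    simp [hf_def, hu.2, not_lt.2 hu.1.le]
  have intf2 : IntegrableOn f (Set.Ioc y x) volume := iA3.congr eq2
  have val2 : ∫ u in Set.Ioc y x, f u = q (x - y) ^ 2 - q 0 ^ 2 := by
    rw [integral_congr_ae eq2.symm, vA3]
  -- last piece
  have eq3 : Set.EqOn f (fun _ => (0:ℝ)) (Set.Ioc x T) := fun u hu => by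
    simp [hf_def, not_lt.2 hu.1.le, not_lt.2 (le_trans hyx hu.1.le)]
  have val3 : ∫ u in Set.Ioc x T, f u = 0 := by
    rw [setIntegral_congr_fun measurableSet_Ioc eq3]; simp
  have intf3 : IntegrableOn f (Set.Ioc x T) volume :=
    (integrableOn_congr_fun eq3 measurableSet_Ioc).mpr (integrableOn_zero)
  -- splits
  have intf02 : IntegrableOn f (Set.Ioc 0 x) volume := by
    rw [← Set.Ioc_union_Ioc_eq_Ioc hy0 hyx]; exact intf.union intf2
  have s2 : ∫ u in Set.Ioc (0:ℝ) x, f u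
      = (∫ u in Set.Ioc (0:ℝ) y, f u) + ∫ u in Set.Ioc y x, f u := by
    rw [← Set.Ioc_union_Ioc_eq_Ioc hy0 hyx,
      setIntegral_union (Set.Ioc_disjoint_Ioc_of_le le_rfl) measurableSet_Ioc intf intf2]
  have s1 : ∫ u in Set.Ioc (0:ℝ) T, f u
      = (∫ u in Set.Ioc (0:ℝ) x, f u) + ∫ u in Set.Ioc x T, f u := by
    rw [← Set.Ioc_union_Ioc_eq_Ioc hx0.le hxT,
      setIntegral_union (Set.Ioc_disjoint_Ioc_of_le le_rfl) measurableSet_Ioc intf02 intf3]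
  have hq_y : 0 ≤ q y := by
    rw [← hq0]
    exact hqm.monotoneOn ⟨le_refl 0, hT.le⟩ ⟨hy0, hyT⟩ hy0
  have hq_xy : q y ≤ q x := hqm.monotoneOn ⟨hy0, hyT⟩ ⟨hx0.le, hxT⟩ hyx
  rw [s1, s2, val3, val2, hq0]
  nlinarith [est1, hq0, mul_nonneg (sub_nonneg.2 hq_xy) (by linarith : (0:ℝ) ≤ q x + q y)]

theorem stmt8 {Ω : Type*} [MeasurableSpace Ω] (μ : Measure Ω) [IsProbabilityMeasure μ]
    (T : ℝ) (hT : 0 < T) (q K : ℝ → ℝ)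
    (hq0 : q 0 = 0) (hqc : ContinuousOn q (Set.Icc 0 T)) (hqm : StrictMonoOn q (Set.Icc 0 T))
    (hK : ∀ τ ∈ Set.Ioc (0:ℝ) T, HasDerivAt (fun s => q s ^ 2) (K τ ^ 2) τ)
    (hKpos : ∀ τ ∈ Set.Ioc (0:ℝ) T, 0 ≤ K τ)
    (hmono : AntitoneOn (fun τ => K τ ^ 2) (Set.Ioc 0 T))
    (B : ℝ → Ω → ℝ)
    (hiso : ∀ x ∈ Set.Icc (0:ℝ) T, ∀ y ∈ Set.Icc (0:ℝ) T,
      ∫ ω, (B x ω - B y ω) ^ 2 ∂μ =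
        ∫ u in Set.Ioc (0:ℝ) T,
          ((if u < x then K (x - u) else 0) - (if u < y then K (y - u) else 0)) ^ 2) :
    ∀ x ∈ Set.Icc (0:ℝ) T, ∀ y ∈ Set.Icc (0:ℝ) T,
      ∫ ω, (B x ω - B y ω) ^ 2 ∂μ ≤ 2 * q |x - y| ^ 2 := by
  intro x hx y hy
  rw [hiso x hx y hy]
  rcases le_total y x with h | h
  · rw [abs_of_nonneg (by linarith)]
    exact keyest T hT q K hq0 hqc hqm hK hKpos hmono hy.1 h hx.2
  · rw [abs_of_nonpos (by linarith), neg_sub]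
    have hswap : (fun u => ((if u < x then K (x - u) else 0) -
        (if u < y then K (y - u) else 0)) ^ 2)
        = fun u => ((if u < y then K (y - u) else 0) -
        (if u < x then K (x - u) else 0)) ^ 2 := funext fun u => by ring
    rw [hswap]
    exact keyest T hT q K hq0 hqc hqm hK hKpos hmono hx.1 h hy.2
end
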